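/- Frequency-uniform bound for the Schrödinger group: for every k ∈ ℤ^n, t ∈ ℝ, and u_0 ∈ 𝒮(ℝ^n), ‖□_k S(t) u_0‖_{L^∞(ℝ^n)} ≲ ‖□_k u_0‖_{L^1(ℝ^n)}, with implicit constant independent of k and t. Consequently ‖S(t)u_0‖_{M_{∞,1}} ≲ ‖u_0‖_{M_{1,1}} uniformly in t. -/

import Mathlib

open MeasureTheory
open scoped ENNReal

/-- Fourier transform on `ℝ^n` (convention `e^{-i x·ξ}`). -/
noncomputable def FT (n : ℕ) (f : (Fin n → ℝ) → ℂ) (ξ : Fin n → ℝ) : ℂ :=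
  ∫ x : Fin n → ℝ, Complex.exp (-Complex.I * ((∑ i, x i * ξ i : ℝ) : ℂ)) * f x

/-- Inverse Fourier transform on `ℝ^n` (convention `e^{i x·ξ}`). -/
noncomputable def IFT (n : ℕ) (f : (Fin n → ℝ) → ℂ) (x : Fin n → ℝ) : ℂ :=
  ∫ ξ : Fin n → ℝ, Complex.exp (Complex.I * ((∑ i, x i * ξ i : ℝ) : ℂ)) * f ξ

/-- `□_k f = 𝔉⁻¹ (σ_0(·−k) 𝔉 f)`, the frequency-uniform decomposition operator. -/
noncomputable def boxOp (n : ℕ) (σ0 : (Fin n → ℝ) → ℂ) (k : Fin n → ℤ)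
    (f : (Fin n → ℝ) → ℂ) : (Fin n → ℝ) → ℂ :=
  IFT n fun ξ => σ0 (ξ - fun i => (k i : ℝ)) * FT n f ξ

/-- `□_k S(t) f = 𝔉⁻¹ (σ_0(·−k) e^{it|ξ|²_±} 𝔉 f)`. -/
noncomputable def boxSchr (n : ℕ) (σ0 : (Fin n → ℝ) → ℂ) (ε : Fin n → ℝ)
    (k : Fin n → ℤ) (t : ℝ) (f : (Fin n → ℝ) → ℂ) : (Fin n → ℝ) → ℂ :=
  IFT n fun ξ => σ0 (ξ - fun i => (k i : ℝ)) *
    Complex.exp (Complex.I * (t : ℂ) * ((∑ i, ε i * ξ i ^ 2 : ℝ) : ℂ)) * FT n f ξ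

open Complex FourierTransform
open scoped RealInnerProductSpace

namespace Stmt10Aux

variable {n : ℕ}


noncomputable abbrev Eu (n : ℕ) := EuclideanSpace ℝ (Fin n)

/-- FT on Euclidean space with convention e^{-i⟪x,ξ⟫}. -/
noncomputable def FTE (n : ℕ) (f : Eu n → ℂ) (ξ : Eu n) : ℂ :=
  ∫ x : Eu n, Complex.exp (-Complex.I * (⟪x, ξ⟫ : ℂ)) * f x

noncomputable def IFTE (n : ℕ) (f : Eu n → ℂ) (x : Eu n) : ℂ :=
  ∫ ξ : Eu n, Complex.exp (Complex.I * (⟪x, ξ⟫ : ℂ)) * f ξ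

lemma FTE_eq_fourier (f : Eu n → ℂ) (ξ : Eu n) :
    FTE n f ξ = 𝓕 f ((2 * Real.pi)⁻¹ • ξ) := by
  rw [Real.fourier_eq', FTE]
  congr 1
  ext x
  rw [real_inner_smul_right, smul_eq_mul]
  have h2π : (2 * Real.pi) ≠ 0 := by positivity
  rw [show -2 * Real.pi * ((2*Real.pi)⁻¹ * ⟪x, ξ⟫) = -⟪x, ξ⟫ by field_simp]
  push_cast
  ring

lemma IFTE_eq_fourierInv (g : Eu n → ℂ) (x : Eu n) :
    IFTE n g x = ((2 * Real.pi) ^ n : ℝ) * 𝓕⁻ (fun η => g ((2 * Real.pi) • η)) x := by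
  have h2π : (0:ℝ) < 2 * Real.pi := by positivity
  have hsm := MeasureTheory.Measure.integral_comp_smul (volume : Measure (Eu n))
    (fun ξ => Complex.exp (Complex.I * (⟪x, ξ⟫ : ℂ)) * g ξ) (2 * Real.pi)
  rw [finrank_euclideanSpace_fin] at hsm
  have key : IFTE n g x = ((2 * Real.pi) ^ n : ℝ) •
      ∫ η : Eu n, Complex.exp (Complex.I * (⟪x, (2 * Real.pi) • η⟫ : ℂ)) * g ((2 * Real.pi) • η) := by
    rw [IFTE, hsm, smul_smul, abs_of_pos (by positivity : (0:ℝ) < ((2 * Real.pi) ^ n)⁻¹),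
      mul_inv_cancel₀ (by positivity : ((2 * Real.pi : ℝ)) ^ n ≠ 0), one_smul]
  rw [key, Real.fourierInv_eq', Complex.real_smul]
  congr 1
  apply integral_congr_ae
  filter_upwards with η
  rw [real_inner_smul_right, smul_eq_mul, real_inner_comm]
  push_cast
  ring_nf

lemma FTE_IFTE (g : Eu n → ℂ) (hgc : Continuous g) (hgi : Integrable g)
    (hIg : Integrable (IFTE n g)) (ξ : Eu n) :
    FTE n (IFTE n g) ξ = ((2 * Real.pi) ^ n : ℝ) * g ξ := by
  set G : Eu n → ℂ := fun η => g ((2 * Real.pi) • η) with hG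
  have h2π : ((2:ℝ) * Real.pi) ≠ 0 := by positivity
  have hGc : Continuous G := hgc.comp (continuous_const_smul _)
  have hGi : Integrable G := hgi.comp_smul h2π
  have hIFTEeq : IFTE n g = fun x => (((2 * Real.pi) ^ n : ℝ) : ℂ) * 𝓕⁻ G x := by
    ext x; exact IFTE_eq_fourierInv g x
  have hinvint : Integrable (𝓕⁻ G) := by
    have h' : Integrable (fun x => (((2 * Real.pi) ^ n : ℝ) : ℂ) * 𝓕⁻ G x) := by
      rw [← hIFTEeq]; exact hIg
    have := h'.const_mul ((((2 * Real.pi) ^ n : ℝ) : ℂ))⁻¹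
    have hne : (2 * (Real.pi : ℂ)) ^ n ≠ 0 := by
      exact_mod_cast pow_ne_zero n h2π
    simpa [← mul_assoc, inv_mul_cancel₀ hne] using this
  have hFint : Integrable (𝓕 G) := by
    have heq : 𝓕 G = fun w => 𝓕⁻ G (-w) := by
      ext w
      rw [Real.fourierInv_eq_fourier_neg, neg_neg]
    rw [heq]; exact hinvint.comp_neg
  have hinv := hGc.fourier_fourierInv_eq hGi hFint
  rw [FTE_eq_fourier, hIFTEeq]
  have hpull : 𝓕 (fun x => (((2 * Real.pi) ^ n : ℝ) : ℂ) * 𝓕⁻ G x) ((2 * Real.pi)⁻¹ • ξ)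
      = (((2 * Real.pi) ^ n : ℝ) : ℂ) * 𝓕 (𝓕⁻ G) ((2 * Real.pi)⁻¹ • ξ) := by
    simp_rw [Real.fourier_eq', smul_eq_mul, ← integral_const_mul]
    congr 1; ext v; ring
  rw [hpull, hinv]
  congr 1
  show g ((2 * Real.pi) • (2 * Real.pi)⁻¹ • ξ) = g ξ
  rw [smul_smul, mul_inv_cancel₀ h2π, one_smul]


noncomputable def me (n : ℕ) : Eu n ≃ᵐ (Fin n → ℝ) := (MeasurableEquiv.toLp 2 (Fin n → ℝ)).symm

lemma integral_transfer (F : (Fin n → ℝ) → ℂ) :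
    ∫ x : Fin n → ℝ, F x = ∫ x : Eu n, F (me n x) :=
  ((EuclideanSpace.volume_preserving_symm_measurableEquiv_toLp (Fin n)).integral_comp
    (me n).measurableEmbedding F).symm

lemma integrable_transfer (F : (Fin n → ℝ) → ℂ) :
    Integrable (fun x : Eu n => F (me n x)) ↔ Integrable F :=
  (EuclideanSpace.volume_preserving_symm_measurableEquiv_toLp (Fin n)).integrable_comp_emb
    (me n).measurableEmbedding

lemma inner_transfer (x : Eu n) (ξ : Fin n → ℝ) :
    (∑ i, (me n x) i * ξ i : ℝ) = ⟪x, (me n).symm ξ⟫ := by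
  simp only [PiLp.inner_apply, RCLike.inner_apply, conj_trivial]
  exact Finset.sum_congr rfl fun i _ => mul_comm _ _

lemma FT_transfer (f : (Fin n → ℝ) → ℂ) (ξ : Fin n → ℝ) :
    FT n f ξ = FTE n (fun x => f (me n x)) ((me n).symm ξ) := by
  rw [FT, FTE, integral_transfer]
  congr 1
  ext x; rw [inner_transfer]

lemma IFT_transfer (g : (Fin n → ℝ) → ℂ) (x : Fin n → ℝ) :
    IFT n g x = IFTE n (fun ξ => g (me n ξ)) ((me n).symm x) := by
  rw [IFT, IFTE, integral_transfer]
  congr 1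
  ext ξ; rw [real_inner_comm, ← inner_transfer]; rw [Finset.sum_congr rfl fun i _ => mul_comm (x i) ((me n) ξ i)]

lemma cont_transfer (f : (Fin n → ℝ) → ℂ) (hf : Continuous f) :
    Continuous (fun x : Eu n => f (me n x)) :=
  hf.comp (PiLp.continuous_ofLp 2 (fun _ : Fin n => ℝ))

/-- Fourier inversion in the pi world. -/
lemma FT_IFT (g : (Fin n → ℝ) → ℂ) (hgc : Continuous g) (hgi : Integrable g)
    (hIg : Integrable (IFT n g)) (ξ : Fin n → ℝ) :
    FT n (IFT n g) ξ = (((2 * Real.pi) ^ n : ℝ) : ℂ) * g ξ := by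
  have hpe : (fun x : Eu n => IFT n g (me n x)) = IFTE n (fun ξ => g (me n ξ)) := by
    ext x
    rw [IFT_transfer]
    congr 1
  rw [FT_transfer, hpe, FTE_IFTE _ (cont_transfer g hgc)
      ((integrable_transfer g).2 hgi) (by rw [← hpe]; exact (integrable_transfer _).2 hIg)]
  exact congrArg (fun y => (((2 * Real.pi) ^ n : ℝ) : ℂ) * g y) ((me n).apply_symm_apply ξ)

lemma norm_exp_I_mul (r : ℝ) : ‖Complex.exp (Complex.I * (r : ℂ))‖ = 1 := by
  rw [Complex.norm_exp]
  simp

lemma norm_exp_neg_I_mul (r : ℝ) : ‖Complex.exp (-Complex.I * (r : ℂ))‖ = 1 := by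
  rw [Complex.norm_exp]
  simp

lemma norm_exp_I_mul_mul (t r : ℝ) : ‖Complex.exp (Complex.I * (t : ℂ) * (r : ℂ))‖ = 1 := by
  rw [Complex.norm_exp]
  simp

lemma FT_norm_le (f : (Fin n → ℝ) → ℂ) (ξ : Fin n → ℝ) :
    ‖FT n f ξ‖ ≤ ∫ x, ‖f x‖ := by
  rw [FT]
  refine (norm_integral_le_integral_norm _).trans_eq ?_
  congr 1
  ext x
  rw [norm_mul, norm_exp_neg_I_mul, one_mul]

lemma IFT_norm_le (g : (Fin n → ℝ) → ℂ) (x : Fin n → ℝ) :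
    ‖IFT n g x‖ ≤ ∫ ξ, ‖g ξ‖ := by
  rw [IFT]
  refine (norm_integral_le_integral_norm _).trans_eq ?_
  congr 1
  ext ξ
  rw [norm_mul, norm_exp_I_mul, one_mul]

lemma IFT_continuous (g : (Fin n → ℝ) → ℂ) (hgc : Continuous g) (hgi : Integrable g) :
    Continuous (IFT n g) := by
  have : Continuous fun x : Fin n → ℝ =>
      ∫ ξ : Fin n → ℝ, Complex.exp (Complex.I * ((∑ i, x i * ξ i : ℝ) : ℂ)) * g ξ := by
    apply continuous_of_dominated (bound := fun ξ => ‖g ξ‖)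
    · intro x
      apply Continuous.aestronglyMeasurable
      fun_prop
    · intro x
      filter_upwards with ξ
      rw [norm_mul, norm_exp_I_mul, one_mul]
    · exact hgi.norm
    · filter_upwards with ξ
      fun_prop
  exact this

lemma FT_continuous (f : (Fin n → ℝ) → ℂ) (hfc : Continuous f) (hfi : Integrable f) :
    Continuous (FT n f) := by
  have : Continuous fun ξ : Fin n → ℝ =>
      ∫ x : Fin n → ℝ, Complex.exp (-Complex.I * ((∑ i, x i * ξ i : ℝ) : ℂ)) * f x := by
    apply continuous_of_dominated (bound := fun x => ‖f x‖)
    · intro ξ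
      apply Continuous.aestronglyMeasurable
      fun_prop
    · intro ξ
      filter_upwards with x
      rw [norm_mul, norm_exp_neg_I_mul, one_mul]
    · exact hfi.norm
    · filter_upwards with x
      fun_prop
  exact this


noncomputable def Creal (n : ℕ) : ℝ :=
  (volume (Metric.closedBall (0 : Fin n → ℝ) (Real.sqrt n))).toReal * ((2 * Real.pi) ^ n)⁻¹

lemma Creal_pos (n : ℕ) (hn : 0 < n) : 0 < Creal n := by
  apply mul_pos
  · exact ENNReal.toReal_pos
      (Metric.measure_closedBall_pos volume _ (Real.sqrt_pos.2 (by exact_mod_cast hn))).ne'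
      measure_closedBall_lt_top.ne
  · positivity

lemma perk (n : ℕ) (hn : 0 < n) (ε : Fin n → ℝ)
    (σ0 : (Fin n → ℝ) → ℂ) (hσc : Continuous σ0) (hσi : Integrable σ0 volume)
    (hσsupp : ∀ ξ : Fin n → ℝ, σ0 ξ ≠ 0 → ‖ξ‖ < Real.sqrt n)
    (u0 : SchwartzMap (Fin n → ℝ) ℂ) (t : ℝ) (k : Fin n → ℤ) :
    (⨆ x : Fin n → ℝ, (‖boxSchr n σ0 ε k t (fun y => u0 y) x‖₊ : ℝ≥0∞))
      ≤ ENNReal.ofReal (Creal n)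
        * ∫⁻ x : Fin n → ℝ, (‖boxOp n σ0 k (fun y => u0 y) x‖₊ : ℝ≥0∞) := by
  set uf : (Fin n → ℝ) → ℂ := fun y => u0 y with huf
  set kr : Fin n → ℝ := fun i => (k i : ℝ) with hkr
  set uhat := FT n uf with huhat
  set g : (Fin n → ℝ) → ℂ := fun ξ => σ0 (ξ - kr) * uhat ξ with hg
  set h := boxOp n σ0 k uf with hh
  have hufc : Continuous uf := u0.continuous
  have hufi : Integrable uf := u0.integrable
  have huhatc : Continuous uhat := FT_continuous uf hufc hufi
  have huhatb : ∀ ξ, ‖uhat ξ‖ ≤ ∫ x, ‖uf x‖ := FT_norm_le uf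
  have hσki : Integrable (fun ξ : Fin n → ℝ => σ0 (ξ - kr)) := by
    have := (memLp_one_iff_integrable.2 hσi).comp_measurePreserving
      (measurePreserving_sub_right volume kr)
    exact memLp_one_iff_integrable.1 this
  have hgc : Continuous g := (hσc.comp (continuous_id.sub continuous_const)).mul huhatc
  have hgi : Integrable g := by
    apply Integrable.mono' (hσki.norm.mul_const (∫ x, ‖uf x‖)) hgc.aestronglyMeasurable
    filter_upwards with ξ
    rw [hg, norm_mul]
    exact mul_le_mul_of_nonneg_left (huhatb ξ) (norm_nonneg _)
  have hbox : h = IFT n g := rfl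
  have hbs : ∀ x, ‖boxSchr n σ0 ε k t uf x‖ ≤ ∫ ξ, ‖g ξ‖ := by
    intro x
    refine (IFT_norm_le _ x).trans_eq ?_
    congr 1
    ext ξ
    simp only [hg, norm_mul]
    rw [norm_exp_I_mul_mul]
    ring
  by_cases hfin : (∫⁻ x, (‖h x‖₊ : ℝ≥0∞)) = ⊤
  · rw [hfin, ENNReal.mul_top (by
      simp only [ne_eq, ENNReal.ofReal_eq_zero, not_le]
      exact Creal_pos n hn)]
    exact le_top
  · have hhc : Continuous h := by rw [hbox]; exact IFT_continuous g hgc hgi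
    have hhi : Integrable h := ⟨hhc.aestronglyMeasurable, Ne.lt_top hfin⟩
    set M : ℝ := ((2 * Real.pi) ^ n)⁻¹ * ∫ y, ‖h y‖ with hM
    have hπne : (((2 * Real.pi) ^ n : ℝ) : ℂ) ≠ 0 := by
      exact_mod_cast (by positivity : ((2 * Real.pi : ℝ)) ^ n ≠ 0)
    have hgb : ∀ ξ, ‖g ξ‖ ≤ M := by
      intro ξ
      have hinv := FT_IFT g hgc hgi (hbox ▸ hhi) ξ
      have heq : g ξ = (((2 * Real.pi) ^ n : ℝ) : ℂ)⁻¹ * FT n (IFT n g) ξ := by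
        rw [hinv, ← mul_assoc, inv_mul_cancel₀ hπne, one_mul]
      rw [heq, norm_mul]
      have hni : ‖(((2 * Real.pi) ^ n : ℝ) : ℂ)⁻¹‖ = ((2 * Real.pi) ^ n)⁻¹ := by
        rw [norm_inv, Complex.norm_real, Real.norm_of_nonneg (by positivity)]
      rw [hni, hM]
      apply mul_le_mul_of_nonneg_left _ (by positivity)
      rw [← hbox]
      exact FT_norm_le h ξ
    have hMnn : 0 ≤ M := mul_nonneg (by positivity) (integral_nonneg fun y => norm_nonneg _)
    have hgint : ∫ ξ, ‖g ξ‖ ≤ (volume (Metric.closedBall kr (Real.sqrt n))).toReal * M := by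
      have hind : Integrable ((Metric.closedBall kr (Real.sqrt n)).indicator fun _ => M) := by
        rw [integrable_indicator_iff measurableSet_closedBall]
        exact integrableOn_const measure_closedBall_lt_top.ne
      calc ∫ ξ, ‖g ξ‖
          ≤ ∫ ξ, ((Metric.closedBall kr (Real.sqrt n)).indicator fun _ => M) ξ := by
            apply integral_mono hgi.norm hind
            intro ξ
            by_cases hmem : ξ ∈ Metric.closedBall kr (Real.sqrt n)
            · rw [Set.indicator_of_mem hmem]; exact hgb ξ
            · rw [Set.indicator_of_notMem hmem]
              have hz : σ0 (ξ - kr) = 0 := by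
                by_contra hnz
                exact hmem (by
                  rw [Metric.mem_closedBall, dist_eq_norm]
                  exact le_of_lt (hσsupp _ hnz))
              simp [hg, hz]
        _ = (volume (Metric.closedBall kr (Real.sqrt n))).toReal * M := by
            rw [integral_indicator_const M measurableSet_closedBall, smul_eq_mul]
            rfl
    have hvol : volume (Metric.closedBall kr (Real.sqrt n))
        = volume (Metric.closedBall (0 : Fin n → ℝ) (Real.sqrt n)) := by
      exact MeasureTheory.Measure.addHaar_closedBall_center volume kr (Real.sqrt n)
    have hfinal : ∀ x, ‖boxSchr n σ0 ε k t uf x‖ ≤ Creal n * ∫ y, ‖h y‖ := by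
      intro x
      refine (hbs x).trans (hgint.trans ?_)
      rw [hvol, Creal, hM]
      exact le_of_eq (by ring)
    refine iSup_le fun x => ?_
    calc (‖boxSchr n σ0 ε k t uf x‖₊ : ℝ≥0∞)
        = ENNReal.ofReal ‖boxSchr n σ0 ε k t uf x‖ := (ofReal_norm _).symm
      _ ≤ ENNReal.ofReal (Creal n * ∫ y, ‖h y‖) := ENNReal.ofReal_le_ofReal (hfinal x)
      _ = ENNReal.ofReal (Creal n) * ENNReal.ofReal (∫ y, ‖h y‖) :=
          ENNReal.ofReal_mul (le_of_lt (Creal_pos n hn))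
      _ = ENNReal.ofReal (Creal n) * ∫⁻ y, (‖h y‖₊ : ℝ≥0∞) := by
          exact congrArg (ENNReal.ofReal (Creal n) * ·) (ofReal_integral_norm_eq_lintegral_enorm hhi)

end Stmt10Aux

/-- Frequency-uniform bound for the Schrödinger group: for all `k ∈ ℤ^n`, `t ∈ ℝ`
and `u₀ ∈ 𝒮(ℝ^n)`, `‖□_k S(t)u₀‖_{L^∞} ≤ C ‖□_k u₀‖_{L¹}` with `C` independent of
`k` and `t`; consequently `‖S(t)u₀‖_{M_{∞,1}} ≤ C‖u₀‖_{M_{1,1}}` uniformly in `t`. -/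
theorem stmt_10 (n : ℕ) (hn : 0 < n) (ε : Fin n → ℝ) (hε : ∀ i, ε i = 1 ∨ ε i = -1)
    (σ0 : (Fin n → ℝ) → ℂ) (hσc : Continuous σ0) (hσi : Integrable σ0 volume)
    (hσsupp : ∀ ξ : Fin n → ℝ, σ0 ξ ≠ 0 → ‖ξ‖ < Real.sqrt n)
    (hσpart : ∀ ξ : Fin n → ℝ, ∑' k : Fin n → ℤ, σ0 (ξ - fun i => (k i : ℝ)) = 1) :
    ∃ C : ℝ≥0∞, C ≠ ⊤ ∧
      ∀ (u0 : SchwartzMap (Fin n → ℝ) ℂ) (t : ℝ),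
        (∀ k : Fin n → ℤ,
          (⨆ x : Fin n → ℝ, (‖boxSchr n σ0 ε k t (fun y => u0 y) x‖₊ : ℝ≥0∞))
            ≤ C * ∫⁻ x : Fin n → ℝ, (‖boxOp n σ0 k (fun y => u0 y) x‖₊ : ℝ≥0∞)) ∧
        (∑' k : Fin n → ℤ,
            ⨆ x : Fin n → ℝ, (‖boxSchr n σ0 ε k t (fun y => u0 y) x‖₊ : ℝ≥0∞))
          ≤ C * ∑' k : Fin n → ℤ,
              ∫⁻ x : Fin n → ℝ, (‖boxOp n σ0 k (fun y => u0 y) x‖₊ : ℝ≥0∞) := by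
  refine ⟨ENNReal.ofReal (Stmt10Aux.Creal n), ENNReal.ofReal_ne_top, fun u0 t => ?_⟩
  refine ⟨fun k => Stmt10Aux.perk n hn ε σ0 hσc hσi hσsupp u0 t k, ?_⟩
  calc (∑' k : Fin n → ℤ,
        ⨆ x : Fin n → ℝ, (‖boxSchr n σ0 ε k t (fun y => u0 y) x‖₊ : ℝ≥0∞))
      ≤ ∑' k : Fin n → ℤ, ENNReal.ofReal (Stmt10Aux.Creal n)
          * ∫⁻ x : Fin n → ℝ, (‖boxOp n σ0 k (fun y => u0 y) x‖₊ : ℝ≥0∞) :=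
        ENNReal.tsum_le_tsum fun k => Stmt10Aux.perk n hn ε σ0 hσc hσi hσsupp u0 t k
    _ = _ := ENNReal.tsum_mul_left
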